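/- Consider the middle-quarter-type Cantor measure on ℝ: the unique probability measure μ with μ = ½(μ∘S_0^{-1} + μ∘S_{1/2}^{-1}), S_b(x) = x/4 + b. Let L = {0, 1} and define τ_0(s) = 4s, τ_1(s) = 4s + 1 on ℤ. Then the maps T_ℓ on L²(μ) determined by T_ℓ e_s = e_{τ_ℓ(s)} for s ∈ ℤ (where e_s(x) = e^{2πi s x}) extend to well-defined isometries of L²(μ) satisfying T_ℓ* T_{ℓ'} = δ_{ℓℓ'} I. -/

import Mathlib

open MeasureTheory Complex

/-- `e_s(x) = e^{2πi s x}` on `ℝ`, for `s : ℤ`. -/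
noncomputable def esZ (s : ℤ) (x : ℝ) : ℂ :=
  Complex.exp (2 * Real.pi * Complex.I * (s : ℂ) * (x : ℂ))

/-- `τ_ℓ(s) = 4s + ℓ` for `ℓ ∈ {0,1}`. -/
def tauZ (l : Fin 2) (s : ℤ) : ℤ := 4 * s + (l : ℤ)

open scoped InnerProductSpace

lemma norm_esZ (s : ℤ) (x : ℝ) : ‖esZ s x‖ = 1 := by
  have h : (2 * (Real.pi : ℂ) * Complex.I * (s : ℂ) * (x : ℂ))
      = ((2 * Real.pi * s * x : ℝ) : ℂ) * Complex.I := by push_cast; ring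
  rw [esZ, h, Complex.norm_exp_ofReal_mul_I]

lemma esZ_zero (x : ℝ) : esZ 0 x = 1 := by simp [esZ]

lemma esZ_one_add_half (x : ℝ) : esZ 1 (x + 1/2) = - esZ 1 x := by
  unfold esZ
  push_cast
  rw [show 2 * (Real.pi : ℂ) * Complex.I * 1 * ((x : ℂ) + 1/2)
      = 2 * Real.pi * Complex.I * 1 * x + Real.pi * Complex.I by ring,
    Complex.exp_add, Complex.exp_pi_mul_I]
  ring

lemma esZ_fract (s : ℤ) (y : ℝ) : esZ s (Int.fract y) = esZ s y := by
  unfold esZ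
  rw [Int.fract]
  push_cast
  rw [show 2 * (Real.pi : ℂ) * Complex.I * (s : ℂ) * ((y : ℂ) - (⌊y⌋ : ℤ))
      = 2 * Real.pi * Complex.I * s * y + ((-(s * ⌊y⌋) : ℤ) : ℂ) * (2 * Real.pi * Complex.I) by
        push_cast; ring,
    Complex.exp_add, Complex.exp_int_mul_two_pi_mul_I, mul_one]

/-- `μ` is supported on `[0, 2/3]`. -/
lemma cantor_supp (μ : Measure ℝ) [IsProbabilityMeasure μ]
    (hself : μ = (2 : ENNReal)⁻¹ •
      (Measure.map (fun x : ℝ => x / 4) μ + Measure.map (fun x : ℝ => x / 4 + 1 / 2) μ)) :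
    ∀ᵐ x ∂μ, x ∈ Set.Icc (0:ℝ) (2/3) := by
  have hmeas : ∀ R : ℝ, MeasurableSet ((Set.Icc (-R) (2/3+R))ᶜ) :=
    fun R => measurableSet_Icc.compl
  have key : ∀ R : ℝ, 0 ≤ R →
      μ (Set.Icc (-R) (2/3+R))ᶜ = μ (Set.Icc (-(4*R)) (2/3+4*R))ᶜ := by
    intro R hR
    refine le_antisymm ?_ (measure_mono (Set.compl_subset_compl.2
      (Set.Icc_subset_Icc (by linarith) (by linarith))))
    conv_lhs => rw [hself]
    rw [Measure.smul_apply, Measure.add_apply,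
      Measure.map_apply (by fun_prop) (hmeas R), Measure.map_apply (by fun_prop) (hmeas R),
      smul_eq_mul]
    have h0 : (fun x : ℝ => x / 4) ⁻¹' (Set.Icc (-R) (2/3+R))ᶜ
        ⊆ (Set.Icc (-(4*R)) (2/3+4*R))ᶜ := by
      intro x hx hxin
      rcases hxin with ⟨h1, h2⟩
      exact hx ⟨by linarith, by linarith⟩
    have h1 : (fun x : ℝ => x / 4 + 1/2) ⁻¹' (Set.Icc (-R) (2/3+R))ᶜ
        ⊆ (Set.Icc (-(4*R)) (2/3+4*R))ᶜ := by
      intro x hx hxin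
      rcases hxin with ⟨h1, h2⟩
      exact hx ⟨by linarith, by linarith⟩
    calc 2⁻¹ * (μ ((fun x : ℝ => x / 4) ⁻¹' (Set.Icc (-R) (2/3+R))ᶜ)
          + μ ((fun x : ℝ => x / 4 + 1/2) ⁻¹' (Set.Icc (-R) (2/3+R))ᶜ))
        ≤ 2⁻¹ * (μ (Set.Icc (-(4*R)) (2/3+4*R))ᶜ + μ (Set.Icc (-(4*R)) (2/3+4*R))ᶜ) := by
          exact mul_le_mul_right (add_le_add (measure_mono h0) (measure_mono h1)) _
      _ = μ (Set.Icc (-(4*R)) (2/3+4*R))ᶜ := by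
          rw [← two_mul, ← mul_assoc, ENNReal.inv_mul_cancel (by norm_num) (by norm_num), one_mul]
  have hnull : ∀ R : ℝ, 0 < R → μ (Set.Icc (-R) (2/3+R))ᶜ = 0 := by
    intro R hR
    set s : ℕ → Set ℝ := fun n => (Set.Icc (-(4^n*R)) (2/3+4^n*R))ᶜ with hs
    have hconst : ∀ n : ℕ, μ (Set.Icc (-R) (2/3+R))ᶜ = μ (s n) := by
      intro n
      induction n with
      | zero => simp [hs]
      | succ n ih =>
        rw [ih, hs]
        have h4 : (4:ℝ)^(n+1)*R = 4*(4^n*R) := by ring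
        simp only [h4]
        exact key (4^n*R) (by positivity)
    have hanti : Antitone s := by
      intro m n hmn
      have : (4:ℝ)^m*R ≤ 4^n*R := by
        have : (4:ℝ)^m ≤ 4^n := pow_le_pow_right₀ (by norm_num) hmn
        nlinarith
      exact Set.compl_subset_compl.2 (Set.Icc_subset_Icc (by linarith) (by linarith))
    have hempty : (⋂ n, s n) = (∅ : Set ℝ) := by
      ext x
      simp only [Set.mem_iInter, Set.mem_empty_iff_false, iff_false, not_forall]
      obtain ⟨n, hn⟩ := pow_unbounded_of_one_lt (|x|/R) (by norm_num : (1:ℝ) < 4)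
      have habs : |x| < 4^n * R := by
        rw [div_lt_iff₀ hR] at hn; linarith
      refine ⟨n, ?_⟩
      simp only [hs, Set.mem_compl_iff, not_not, Set.mem_Icc]
      constructor
      · linarith [neg_abs_le x]
      · linarith [le_abs_self x]
    have htend := tendsto_measure_iInter_atTop (μ := μ)
      (fun n => (hmeas _).nullMeasurableSet) hanti ⟨0, measure_ne_top μ _⟩
    rw [hempty, measure_empty] at htend
    have hconst' : (μ ∘ s) = fun _ : ℕ => μ (Set.Icc (-R) (2/3+R))ᶜ :=
      funext fun n => (hconst n).symm
    rw [hconst'] at htend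
    exact tendsto_nhds_unique htend tendsto_const_nhds |>.symm
  have hIcc : μ (Set.Icc (0:ℝ) (2/3))ᶜ = 0 := by
    have hsub : (Set.Icc (0:ℝ) (2/3))ᶜ
        ⊆ ⋃ n : ℕ, (Set.Icc (-(1/(n+1):ℝ)) (2/3+1/(n+1)))ᶜ := by
      intro x hx
      simp only [Set.mem_compl_iff, Set.mem_Icc, not_and_or, not_le] at hx
      rcases hx with h | h
      · obtain ⟨n, hn⟩ := exists_nat_one_div_lt (show (0:ℝ) < -x by linarith)
        refine Set.mem_iUnion.2 ⟨n, fun hmem => ?_⟩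
        rcases hmem with ⟨h1, _⟩
        have : (1:ℝ)/(n+1) < -x := hn
        linarith
      · obtain ⟨n, hn⟩ := exists_nat_one_div_lt (show (0:ℝ) < x - 2/3 by linarith)
        refine Set.mem_iUnion.2 ⟨n, fun hmem => ?_⟩
        rcases hmem with ⟨_, h2⟩
        have : (1:ℝ)/(n+1) < x - 2/3 := hn
        linarith
    exact measure_mono_null hsub (measure_iUnion_null fun n => hnull _ (by positivity))
  rw [ae_iff]
  convert hIcc using 2
  rfl

lemma esZ_continuous (s : ℤ) : Continuous (esZ s) :=
  Complex.continuous_exp.comp (continuous_const.mul Complex.continuous_ofReal)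

lemma esZ_mul_esZ (a s : ℤ) (x : ℝ) : esZ a x * esZ s (4*x) = esZ (4*s+a) x := by
  unfold esZ
  rw [← Complex.exp_add]
  congr 1
  push_cast
  ring

private lemma measure_half_add_self (ν : Measure ℝ) : (2 : ENNReal)⁻¹ • (ν + ν) = ν := by
  ext s hs
  rw [Measure.smul_apply, Measure.add_apply, smul_eq_mul, ← two_mul, ← mul_assoc,
    ENNReal.inv_mul_cancel (by norm_num) (by norm_num), one_mul]

lemma cantor_mp (μ : Measure ℝ) [IsProbabilityMeasure μ]
    (hself : μ = (2 : ENNReal)⁻¹ •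
      (Measure.map (fun x : ℝ => x / 4) μ + Measure.map (fun x : ℝ => x / 4 + 1 / 2) μ)) :
    MeasurePreserving (fun x : ℝ => Int.fract (4*x)) μ μ := by
  have hm : Measurable (fun x : ℝ => Int.fract (4*x)) :=
    measurable_fract.comp (measurable_const_mul 4)
  refine ⟨hm, ?_⟩
  have hfr : Measure.map (fun x : ℝ => Int.fract x) μ = μ := by
    have h : (fun x : ℝ => Int.fract x) =ᵐ[μ] id := by
      filter_upwards [cantor_supp μ hself] with x hx
      exact Int.fract_eq_self.2 ⟨hx.1, lt_of_le_of_lt hx.2 (by norm_num)⟩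
    rw [Measure.map_congr h, Measure.map_id]
  conv_lhs => rw [hself]
  rw [Measure.map_smul, Measure.map_add _ _ hm,
    Measure.map_map hm (by fun_prop), Measure.map_map hm (by fun_prop)]
  have e0 : ((fun x : ℝ => Int.fract (4*x)) ∘ fun x : ℝ => x / 4)
      = fun x : ℝ => Int.fract x := by
    funext x
    show Int.fract (4*(x/4)) = Int.fract x
    congr 1
    ring
  have e1 : ((fun x : ℝ => Int.fract (4*x)) ∘ fun x : ℝ => x / 4 + 1/2)
      = fun x : ℝ => Int.fract x := by
    funext x
    show Int.fract (4*(x/4+1/2)) = Int.fract x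
    rw [show (4:ℝ)*(x/4+1/2) = x + (2:ℤ) by push_cast; ring, Int.fract_add_intCast]
  rw [e0, e1, measure_half_add_self, hfr]


/-- For the middle-quarter-type Cantor measure, the maps `T_ℓ e_s = e_{τ_ℓ(s)}` extend to
isometries of `L²(μ)` with `T_ℓ* T_ℓ' = δ_{ℓℓ'} I`. -/
theorem stmt10 (μ : Measure ℝ) (hprob : IsProbabilityMeasure μ)
    (hself : μ = (2 : ENNReal)⁻¹ •
      (Measure.map (fun x : ℝ => x / 4) μ + Measure.map (fun x : ℝ => x / 4 + 1 / 2) μ))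
    (hes : ∀ s : ℤ, MemLp (esZ s) 2 μ) :
    ∃ T : Fin 2 → (Lp ℂ 2 μ →L[ℂ] Lp ℂ 2 μ),
      (∀ l : Fin 2, ∀ f : Lp ℂ 2 μ, ‖T l f‖ = ‖f‖) ∧
      (∀ l l' : Fin 2, (ContinuousLinearMap.adjoint (T l)).comp (T l') =
        if l = l' then 1 else 0) ∧
      (∀ l : Fin 2, ∀ s : ℤ, T l ((hes s).toLp (esZ s)) =
        (hes (tauZ l s)).toLp (esZ (tauZ l s))) := by
  classical
  have hΦm : Measurable (fun x : ℝ => Int.fract (4*x)) :=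
    measurable_fract.comp (measurable_const_mul 4)
  have hMP : MeasurePreserving (fun x : ℝ => Int.fract (4*x)) μ μ := cantor_mp μ hself
  set Φ : ℝ → ℝ := fun x => Int.fract (4*x) with hΦdef
  set g : Fin 2 → (ℝ → ℂ) → ℝ → ℂ := fun l f x => esZ (l:ℤ) x * f (Φ x) with hgdef
  have hgsm : ∀ (l : Fin 2) (f : ℝ → ℂ), StronglyMeasurable f → StronglyMeasurable (g l f) := by
    intro l f hf
    exact ((esZ_continuous (l:ℤ)).stronglyMeasurable).mul (hf.comp_measurable hΦm)
  have hmem : ∀ (l : Fin 2) (f : Lp ℂ 2 μ), MemLp (g l ↑f) 2 μ := by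
    intro l f
    have h1 : MemLp ((↑f : ℝ → ℂ) ∘ Φ) 2 μ := (Lp.memLp f).comp_measurePreserving hMP
    refine h1.of_le ((hgsm l _ (Lp.stronglyMeasurable f)).aestronglyMeasurable) ?_
    refine Filter.Eventually.of_forall fun x => ?_
    simp only [hgdef, norm_mul, norm_esZ, one_mul, Function.comp_apply]
    exact le_rfl
  have hcong : ∀ (l : Fin 2) (u v : ℝ → ℂ), u =ᵐ[μ] v → g l u =ᵐ[μ] g l v := by
    intro l u v h
    have h' : u ∘ Φ =ᵐ[μ] v ∘ Φ := by
      apply ae_eq_comp hΦm.aemeasurable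
      rwa [hMP.map_eq]
    filter_upwards [h'] with x hx
    simp only [hgdef]
    rw [show u (Φ x) = (u ∘ Φ) x from rfl, hx]
    rfl
  let Tlin : Fin 2 → (Lp ℂ 2 μ →ₗ[ℂ] Lp ℂ 2 μ) := fun l =>
    { toFun := fun f => (hmem l f).toLp (g l ↑f)
      map_add' := by
        intro f f'
        rw [← MemLp.toLp_add]
        refine MemLp.toLp_congr _ _ ?_
        refine (hcong l _ _ (Lp.coeFn_add f f')).trans ?_
        refine Filter.Eventually.of_forall fun x => ?_
        simp only [hgdef, Pi.add_apply]
        ring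
      map_smul' := by
        intro c f
        simp only [RingHom.id_apply]
        rw [← MemLp.toLp_const_smul]
        refine MemLp.toLp_congr _ _ ?_
        refine (hcong l _ _ (Lp.coeFn_smul c f)).trans ?_
        refine Filter.Eventually.of_forall fun x => ?_
        simp only [hgdef, Pi.smul_apply, smul_eq_mul]
        ring }
  have hTapp : ∀ l f, Tlin l f = (hmem l f).toLp (g l ↑f) := fun _ _ => rfl
  have hTnorm : ∀ l f, ‖Tlin l f‖ = ‖f‖ := by
    intro l f
    rw [hTapp, Lp.norm_toLp]
    have h1 : eLpNorm (g l ↑f) 2 μ = eLpNorm ((↑f : ℝ → ℂ) ∘ Φ) 2 μ := by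
      apply eLpNorm_congr_norm_ae
      refine Filter.Eventually.of_forall fun x => ?_
      simp only [hgdef, Function.comp_apply, norm_mul, norm_esZ, one_mul]
    have h2 : eLpNorm ((↑f : ℝ → ℂ) ∘ Φ) 2 μ = eLpNorm (↑f : ℝ → ℂ) 2 μ :=
      eLpNorm_comp_measurePreserving (Lp.aestronglyMeasurable f) hMP
    rw [h1, h2, Lp.norm_def]
  let TI : Fin 2 → (Lp ℂ 2 μ →ₗᵢ[ℂ] Lp ℂ 2 μ) := fun l => ⟨Tlin l, hTnorm l⟩
  have hinner0 : ∀ (l l' : Fin 2), l ≠ l' → ∀ F G : Lp ℂ 2 μ,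
      (inner ℂ (Tlin l F) (Tlin l' G) : ℂ) = 0 := by
    intro l l' hne F G
    rw [MeasureTheory.L2.inner_def]
    set Fc : ℝ → ℂ := (↑F : ℝ → ℂ) with hFc
    set Gc : ℝ → ℂ := (↑G : ℝ → ℂ) with hGc
    set h : ℝ → ℂ := fun x => (starRingEnd ℂ) (g l Fc x) * g l' Gc x with hh
    have hae : (fun x => (inner ℂ ((Tlin l F : Lp ℂ 2 μ) x) ((Tlin l' G : Lp ℂ 2 μ) x) : ℂ))
        =ᵐ[μ] h := by
      rw [hTapp, hTapp]
      filter_upwards [MemLp.coeFn_toLp (hmem l F), MemLp.coeFn_toLp (hmem l' G)] with x h1 h2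
      rw [RCLike.inner_apply, h1, h2, mul_comm]
    rw [integral_congr_ae hae]
    have hint : Integrable h μ :=
      (MeasureTheory.L2.integrable_inner (𝕜 := ℂ) (Tlin l F) (Tlin l' G)).congr hae
    have hsm_h : StronglyMeasurable h := by
      have hF : StronglyMeasurable (g l Fc) := hgsm l Fc (Lp.stronglyMeasurable F)
      have hG : StronglyMeasurable (g l' Gc) := hgsm l' Gc (Lp.stronglyMeasurable G)
      exact (Complex.continuous_conj.comp_stronglyMeasurable hF).mul hG
    have hpt : ∀ x : ℝ, h (x/4 + 1/2) = - h (x/4) := by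
      intro x
      have hΦa : Φ (x/4) = Int.fract x := by
        show Int.fract (4*(x/4)) = Int.fract x
        congr 1; ring
      have hΦb : Φ (x/4 + 1/2) = Int.fract x := by
        show Int.fract (4*(x/4+1/2)) = Int.fract x
        rw [show (4:ℝ)*(x/4+1/2) = x + (2:ℤ) by push_cast; ring, Int.fract_add_intCast]
      fin_cases l <;> fin_cases l' <;>
        first
          | exact absurd rfl hne
          | (simp only [hh, hgdef, hΦa, hΦb, Fin.isValue, Fin.val_zero, Fin.val_one,
              Int.cast_ofNat_Int, Nat.cast_zero, Nat.cast_one, Int.cast_zero, Int.cast_one,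
              esZ_zero, esZ_one_add_half, map_mul, map_neg, map_one]
             ring)
    have hμν : (2:ENNReal) • μ
        = Measure.map (fun x : ℝ => x / 4) μ + Measure.map (fun x : ℝ => x / 4 + 1 / 2) μ := by
      conv_lhs => rw [hself]
      rw [smul_smul, ENNReal.mul_inv_cancel (by norm_num) (by norm_num), one_smul]
    have hint' : Integrable h
        (Measure.map (fun x : ℝ => x / 4) μ + Measure.map (fun x : ℝ => x / 4 + 1 / 2) μ) := by
      rw [← hμν]
      exact hint.smul_measure (by norm_num)
    have hint0 := (integrable_add_measure.mp hint').1
    have hint1 := (integrable_add_measure.mp hint').2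
    conv_lhs => rw [hself]
    rw [integral_smul_measure, integral_add_measure hint0 hint1,
      integral_map (by fun_prop) hsm_h.aestronglyMeasurable,
      integral_map (by fun_prop) hsm_h.aestronglyMeasurable]
    have heq : (fun x : ℝ => h (x/4 + 1/2)) = fun x : ℝ => - h (x/4) := funext hpt
    rw [heq, integral_neg, add_neg_cancel, smul_zero]
  refine ⟨fun l => (TI l).toContinuousLinearMap, fun l f => (TI l).norm_map f, ?_, ?_⟩
  · intro l l'
    by_cases hll : l = l'
    · subst hll
      rw [if_pos rfl]
      refine ContinuousLinearMap.ext fun f => ?_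
      refine ext_inner_left ℂ fun v => ?_
      rw [ContinuousLinearMap.comp_apply, ContinuousLinearMap.adjoint_inner_right,
        ContinuousLinearMap.one_apply]
      exact (TI l).inner_map_map v f
    · rw [if_neg hll]
      refine ContinuousLinearMap.ext fun f => ?_
      refine ext_inner_left ℂ fun v => ?_
      rw [ContinuousLinearMap.comp_apply, ContinuousLinearMap.adjoint_inner_right,
        ContinuousLinearMap.zero_apply, inner_zero_right]
      exact hinner0 l l' hll v f
  · intro l s
    show (hmem l _).toLp _ = _
    refine MemLp.toLp_congr _ _ ?_
    refine (hcong l _ _ (MemLp.coeFn_toLp (hes s))).trans ?_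
    refine Filter.Eventually.of_forall fun x => ?_
    simp only [hgdef]
    have hx : Φ x = Int.fract (4*x) := rfl
    rw [hx, esZ_fract, esZ_mul_esZ]
    rfl
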